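/- Let h ∈ H_{I,n} with I∪{n} = {i_1 < ⋯ < i_{r+1} = n} and i_0 = 0, and define the ordinary Hessenberg function h̃ ∈ H_n by h̃(i) = h(i_k) for i_{k−1} < i ≤ i_k (1 ≤ k ≤ r+1). Then for every N ≥ 1, csf_q^N(h̃) = csf_q^N(h) · Π_{k=1}^{r+1} [i_k − i_{k−1}]_q!. (This is eq. (80d) of the paper, the chromatic-quasisymmetric form of Corollary 31, proved by iterating Lemma 80.) -/

import Mathlib

namespace GenHess

open scoped Classical

noncomputable section

/-- The vertex set `I ∪ {n}` of the weighted graph of a generalized Hessenberg function. -/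
def verts (n : ℕ) (I : Finset ℕ) : Finset ℕ := insert n I

/-- `h : I ∪ {n} → I ∪ {n}` is a generalized Hessenberg function for `(I, n)`,
with `I ⊆ {1, …, n-1}`, `h i ≥ i`, and `h` weakly increasing on `I ∪ {n}`. -/
def IsGenHess (n : ℕ) (I : Finset ℕ) (h : ℕ → ℕ) : Prop :=
  (∀ i ∈ I, 1 ≤ i ∧ i ≤ n - 1) ∧
  (∀ i ∈ verts n I, h i ∈ verts n I) ∧
  (∀ i ∈ verts n I, i ≤ h i) ∧
  (∀ i ∈ verts n I, ∀ j ∈ verts n I, i ≤ j → h i ≤ h j)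

/-- The weight `w_h(i_k) = i_k - i_{k-1}` of a vertex: `v` minus the largest vertex
below `v` (or `0` if there is none). -/
def wt (n : ℕ) (I : Finset ℕ) (v : ℕ) : ℕ :=
  v - ((verts n I).filter (fun u => u < v)).sup id

/-- A proper coloring of the weighted graph `(Γ_h, w_h)` with colors in `[N]`:
each vertex `v` gets a set of colors of size `w_h(v)`, and adjacent vertices get
disjoint color sets (there is an edge `{i,j}` whenever `i < j ≤ h i`). -/
def IsProper {N : ℕ} (n : ℕ) (I : Finset ℕ) (h : ℕ → ℕ)
    (γ : {x // x ∈ verts n I} → Finset (Fin N)) : Prop :=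
  (∀ v : {x // x ∈ verts n I}, (γ v).card = wt n I v.val) ∧
  ∀ v u : {x // x ∈ verts n I}, v.val < u.val → u.val ≤ h v.val → Disjoint (γ v) (γ u)

/-- The ascent statistic `asc_h(γ) = Σ_{edges i<j} #{(a,b) ∈ γ(i)×γ(j) : a < b}`. -/
def asc {N : ℕ} (n : ℕ) (I : Finset ℕ) (h : ℕ → ℕ)
    (γ : {x // x ∈ verts n I} → Finset (Fin N)) : ℕ :=
  ∑ v : {x // x ∈ verts n I}, ∑ u : {x // x ∈ verts n I},
    if v.val < u.val ∧ u.val ≤ h v.val then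
      ((γ v ×ˢ γ u).filter fun ab => ab.1 < ab.2).card
    else 0

/-- The truncated chromatic quasisymmetric function `csf_q^N(h)`, as an element of
`ℤ[x_1,…,x_N][q]` (the outer `Polynomial.X` is `q`). -/
def csf (n : ℕ) (I : Finset ℕ) (h : ℕ → ℕ) (N : ℕ) :
    Polynomial (MvPolynomial (Fin N) ℤ) :=
  ∑ γ ∈ Finset.univ.filter
      (fun γ : {x // x ∈ verts n I} → Finset (Fin N) => IsProper n I h γ),
    Polynomial.C (∏ v : {x // x ∈ verts n I}, ∏ a ∈ γ v, MvPolynomial.X a) *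
      Polynomial.X ^ asc n I h γ

/-- The `q`-integer `[m]_q = 1 + q + ⋯ + q^{m-1}`. -/
def qNum (R : Type) [CommRing R] (m : ℕ) : Polynomial R :=
  ∑ i ∈ Finset.range m, Polynomial.X ^ i

/-- The `q`-factorial `[m]_q!`. -/
def qFact (R : Type) [CommRing R] : ℕ → Polynomial R
  | 0 => 1
  | m + 1 => qNum R (m + 1) * qFact R m

/-- The elementary symmetric polynomial `e_m(x_1,…,x_N)`, viewed as a constant
polynomial in `q`. -/
def esym (N m : ℕ) : Polynomial (MvPolynomial (Fin N) ℤ) :=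
  Polynomial.C (MvPolynomial.esymm (Fin N) ℤ m)

end

end GenHess

-- ===================== auxiliary development =====================

namespace GenHess

open Finset Polynomial
open scoped Classical

noncomputable section

lemma qFact_one (R : Type) [CommRing R] : qFact R 1 = 1 := by
  show qNum R 1 * qFact R 0 = 1
  simp [qNum, qFact]

lemma qNum_succ (R : Type) [CommRing R] (m : ℕ) :
    qNum R (m + 1) = qNum R m + Polynomial.X ^ m :=
  Finset.sum_range_succ _ _

lemma rank_sum (R : Type) [CommRing R] {α : Type*} [LinearOrder α] (S : Finset α) :
    ∑ c ∈ S, (Polynomial.X : Polynomial R) ^ ((S.filter fun b => b < c).card) = qNum R S.card := by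
  induction S using Finset.induction_on_max with
  | empty => simp [qNum]
  | insert a s ha ih =>
    have has : a ∉ s := fun h => lt_irrefl a (ha a h)
    rw [Finset.sum_insert has]
    have h1 : (Finset.filter (fun b => b < a) (insert a s)) = s := by
      rw [Finset.filter_insert, if_neg (lt_irrefl a)]
      exact Finset.filter_true_of_mem ha
    have h2 : ∀ c ∈ s, (Finset.filter (fun b => b < c) (insert a s))
        = s.filter (fun b => b < c) := by
      intro c hc
      rw [Finset.filter_insert, if_neg (asymm (ha c hc))]
    rw [h1, Finset.sum_congr rfl (fun c hc => by rw [h2 c hc]), ih,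
      Finset.card_insert_of_notMem has, qNum_succ]
    ring

variable {N : ℕ}

def extg (n : ℕ) (I : Finset ℕ) (γ : {x // x ∈ verts n I} → Finset (Fin N)) :
    ℕ → Finset (Fin N) :=
  fun i => if h : i ∈ verts n I then γ ⟨i, h⟩ else ∅

lemma extg_coe (n : ℕ) (I : Finset ℕ) (γ : {x // x ∈ verts n I} → Finset (Fin N))
    (v : {x // x ∈ verts n I}) : extg n I γ v.val = γ v := by
  simp [extg, v.2]

def monN (V : Finset ℕ) (g : ℕ → Finset (Fin N)) : MvPolynomial (Fin N) ℤ :=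
  ∏ v ∈ V, ∏ a ∈ g v, MvPolynomial.X a

def pcnt (A B : Finset (Fin N)) : ℕ := ((A ×ˢ B).filter fun ab => ab.1 < ab.2).card

def ascN (V : Finset ℕ) (h : ℕ → ℕ) (g : ℕ → Finset (Fin N)) : ℕ :=
  ∑ v ∈ V, ∑ u ∈ V, if v < u ∧ u ≤ h v then pcnt (g v) (g u) else 0

def ProperN (n : ℕ) (I : Finset ℕ) (h : ℕ → ℕ) (g : ℕ → Finset (Fin N)) : Prop :=
  (∀ v ∈ verts n I, (g v).card = wt n I v) ∧
  (∀ v ∈ verts n I, ∀ u ∈ verts n I, v < u → u ≤ h v → Disjoint (g v) (g u))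

lemma pcnt_eq (A B : Finset (Fin N)) :
    pcnt A B = ∑ a ∈ A, ∑ b ∈ B, if a < b then 1 else 0 := by
  rw [pcnt, Finset.card_filter, Finset.sum_product]

lemma pcnt_singleton (A : Finset (Fin N)) (c : Fin N) :
    pcnt A {c} = (A.filter fun b => b < c).card := by
  rw [pcnt_eq]
  simp only [Finset.sum_singleton]
  exact (Finset.card_filter _ _).symm

lemma pcnt_erase_left (A B : Finset (Fin N)) {c : Fin N} (hc : c ∈ A) :
    pcnt (A.erase c) B + pcnt {c} B = pcnt A B := by
  rw [pcnt_eq, pcnt_eq, pcnt_eq, Finset.sum_singleton]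
  conv_rhs => rw [← Finset.insert_erase hc]
  rw [Finset.sum_insert (Finset.notMem_erase c A)]
  ring

lemma pcnt_erase_right (A B : Finset (Fin N)) {c : Fin N} (hc : c ∈ B) :
    pcnt A (B.erase c) + pcnt A {c} = pcnt A B := by
  rw [pcnt_eq, pcnt_eq, pcnt_eq, ← Finset.sum_add_distrib]
  refine Finset.sum_congr rfl fun a _ => ?_
  rw [Finset.sum_singleton]
  conv_rhs => rw [← Finset.insert_erase hc]
  rw [Finset.sum_insert (Finset.notMem_erase c B)]
  ring

lemma pcnt_erase_singleton (A : Finset (Fin N)) {c : Fin N} (hc : c ∈ A) :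
    pcnt (A.erase c) {c} = (A.filter fun b => b < c).card := by
  rw [pcnt_singleton]
  congr 1
  rw [Finset.filter_erase]
  exact Finset.erase_eq_of_notMem (by simp)

lemma mon_eq (n : ℕ) (I : Finset ℕ) (γ : {x // x ∈ verts n I} → Finset (Fin N)) :
    (∏ v : {x // x ∈ verts n I}, ∏ a ∈ γ v, (MvPolynomial.X a : MvPolynomial (Fin N) ℤ))
      = monN (verts n I) (extg n I γ) := by
  rw [monN, ← Finset.prod_coe_sort (verts n I)
    (fun v => ∏ a ∈ extg n I γ v, (MvPolynomial.X a : MvPolynomial (Fin N) ℤ))]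
  exact Finset.prod_congr rfl fun v _ => by rw [extg_coe]

lemma asc_eq (n : ℕ) (I : Finset ℕ) (h : ℕ → ℕ)
    (γ : {x // x ∈ verts n I} → Finset (Fin N)) :
    asc n I h γ = ascN (verts n I) h (extg n I γ) := by
  rw [asc, ascN]
  have step1 : ∀ v : {x // x ∈ verts n I},
      (∑ u : {x // x ∈ verts n I}, if v.val < u.val ∧ u.val ≤ h v.val then
        ((γ v ×ˢ γ u).filter fun ab => ab.1 < ab.2).card else 0)
      = ∑ u ∈ verts n I, if v.val < u ∧ u ≤ h v.val then
          pcnt (extg n I γ v.val) (extg n I γ u) else 0 := by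
    intro v
    rw [← Finset.sum_coe_sort (verts n I)
      (fun u => if v.val < u ∧ u ≤ h v.val then pcnt (extg n I γ v.val) (extg n I γ u) else 0)]
    exact Finset.sum_congr rfl fun u _ => by rw [extg_coe, extg_coe]; rfl
  have step2 : (∑ v : {x // x ∈ verts n I}, ∑ u : {x // x ∈ verts n I},
      if v.val < u.val ∧ u.val ≤ h v.val then
        ((γ v ×ˢ γ u).filter fun ab => ab.1 < ab.2).card else 0)
      = ∑ v : {x // x ∈ verts n I}, ∑ u ∈ verts n I,
          if v.val < u ∧ u ≤ h v.val then
            pcnt (extg n I γ v.val) (extg n I γ u) else 0 :=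
    Finset.sum_congr rfl fun v _ => step1 v
  rw [step2]
  exact Finset.sum_coe_sort (verts n I)
    (fun x => ∑ u ∈ verts n I, if x < u ∧ u ≤ h x then pcnt (extg n I γ x) (extg n I γ u) else 0)

lemma isProper_iff (n : ℕ) (I : Finset ℕ) (h : ℕ → ℕ)
    (γ : {x // x ∈ verts n I} → Finset (Fin N)) :
    IsProper n I h γ ↔ ProperN n I h (extg n I γ) := by
  constructor
  · rintro ⟨h1, h2⟩
    refine ⟨fun v hv => ?_, fun v hv u hu hlt hle => ?_⟩
    · rw [show extg n I γ v = γ ⟨v, hv⟩ from extg_coe n I γ ⟨v, hv⟩]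
      exact h1 ⟨v, hv⟩
    · rw [show extg n I γ v = γ ⟨v, hv⟩ from extg_coe n I γ ⟨v, hv⟩,
        show extg n I γ u = γ ⟨u, hu⟩ from extg_coe n I γ ⟨u, hu⟩]
      exact h2 ⟨v, hv⟩ ⟨u, hu⟩ hlt hle
  · rintro ⟨h1, h2⟩
    refine ⟨fun v => ?_, fun v u hlt hle => ?_⟩
    · have := h1 v.val v.2; rwa [extg_coe] at this
    · have := h2 v.val v.2 u.val u.2 hlt hle; rwa [extg_coe, extg_coe] at this

lemma csf_eq (n : ℕ) (I : Finset ℕ) (h : ℕ → ℕ) (N : ℕ) :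
    csf n I h N = ∑ γ ∈ Finset.univ.filter
      (fun γ : {x // x ∈ verts n I} → Finset (Fin N) => IsProper n I h γ),
      Polynomial.C (monN (verts n I) (extg n I γ)) *
        Polynomial.X ^ ascN (verts n I) h (extg n I γ) := by
  rw [csf]
  exact Finset.sum_congr rfl fun γ _ => by rw [mon_eq, asc_eq]

lemma csf_congr (n : ℕ) (I : Finset ℕ) (h₁ h₂ : ℕ → ℕ) (N : ℕ)
    (hh : ∀ v ∈ verts n I, ∀ u ∈ verts n I, v < u → (u ≤ h₁ v ↔ u ≤ h₂ v)) :
    csf n I h₁ N = (csf n I h₂ N : Polynomial (MvPolynomial (Fin N) ℤ)) := by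
  have hp : ∀ γ : {x // x ∈ verts n I} → Finset (Fin N),
      IsProper n I h₁ γ ↔ IsProper n I h₂ γ := by
    intro γ
    unfold IsProper
    constructor
    · rintro ⟨c1, c2⟩
      exact ⟨c1, fun v u hlt hle =>
        c2 v u hlt ((hh v.val v.2 u.val u.2 hlt).mpr hle)⟩
    · rintro ⟨c1, c2⟩
      exact ⟨c1, fun v u hlt hle =>
        c2 v u hlt ((hh v.val v.2 u.val u.2 hlt).mp hle)⟩
  have ha : ∀ γ : {x // x ∈ verts n I} → Finset (Fin N),
      asc n I h₁ γ = asc n I h₂ γ := by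
    intro γ
    unfold asc
    refine Finset.sum_congr rfl fun v _ => Finset.sum_congr rfl fun u _ => ?_
    by_cases hlt : v.val < u.val
    · by_cases hle : u.val ≤ h₁ v.val
      · rw [if_pos ⟨hlt, hle⟩, if_pos ⟨hlt, (hh v.val v.2 u.val u.2 hlt).mp hle⟩]
      · rw [if_neg (fun hc => hle hc.2),
          if_neg (fun hc => hle ((hh v.val v.2 u.val u.2 hlt).mpr hc.2))]
    · rw [if_neg (fun hc => hlt hc.1), if_neg (fun hc => hlt hc.1)]
  rw [csf, csf, Finset.filter_congr (fun γ _ => hp γ)]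
  exact Finset.sum_congr rfl fun γ _ => by rw [ha]

-- ===================== part 2 =====================

lemma verts_insert (n j : ℕ) (I : Finset ℕ) :
    verts n (insert j I) = insert j (verts n I) := Finset.insert_comm _ _ _

lemma mem_verts_ne (n : ℕ) (I : Finset ℕ) {j : ℕ} (hjV : j ∉ verts n I) :
    ∀ v ∈ verts n I, v ≠ j := fun v hv hvj => hjV (hvj ▸ hv)

lemma wt_w1 (n : ℕ) (I : Finset ℕ) {j : ℕ} (hjV : j ∉ verts n I) :
    wt n (insert j I) (j + 1) = 1 := by
  rw [wt, verts_insert, Finset.filter_insert, if_pos (Nat.lt_succ_self j)]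
  have hle : ((verts n I).filter (fun u => u < j + 1)).sup id ≤ j :=
    Finset.sup_le fun u hu => Nat.lt_succ_iff.mp (Finset.mem_filter.mp hu).2
  rw [Finset.sup_insert]
  have : (id j) ⊔ ((verts n I).filter (fun u => u < j + 1)).sup id = j :=
    max_eq_left hle
  rw [this]
  omega

lemma filter_lt_eq (n : ℕ) (I : Finset ℕ) {j : ℕ} (hjV : j ∉ verts n I) :
    (verts n I).filter (fun u => u < j) = (verts n I).filter (fun u => u < j + 1) := by
  apply Finset.filter_congr
  intro u hu
  have := mem_verts_ne n I hjV u hu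
  constructor <;> intro <;> omega

lemma wt_w2 (n : ℕ) (I : Finset ℕ) {j : ℕ} (hjV : j ∉ verts n I) :
    wt n I (j + 1) = wt n (insert j I) j + 1 := by
  have hle : ((verts n I).filter (fun u => u < j + 1)).sup id ≤ j :=
    Finset.sup_le fun u hu => Nat.lt_succ_iff.mp (Finset.mem_filter.mp hu).2
  rw [wt, wt, verts_insert, Finset.filter_insert, if_neg (lt_irrefl j),
    filter_lt_eq n I hjV]
  omega

lemma wt_w3 (n : ℕ) (I : Finset ℕ) {j : ℕ} (hjV : j ∉ verts n I)
    (hj1V : j + 1 ∈ verts n I) (v : ℕ) (hv : v ∈ verts n I) (hvj1 : v ≠ j + 1) :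
    wt n (insert j I) v = wt n I v := by
  rw [wt, wt, verts_insert, Finset.filter_insert]
  by_cases hjv : j < v
  · rw [if_pos hjv, Finset.sup_insert]
    have hj1v : j + 1 < v := by
      have := mem_verts_ne n I hjV v hv
      omega
    have hmem : j + 1 ∈ (verts n I).filter (fun u => u < v) :=
      Finset.mem_filter.mpr ⟨hj1V, hj1v⟩
    have hge : j + 1 ≤ ((verts n I).filter (fun u => u < v)).sup id :=
      Finset.le_sup (f := id) hmem
    have : (id j) ⊔ ((verts n I).filter (fun u => u < v)).sup id
        = ((verts n I).filter (fun u => u < v)).sup id := by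
      apply max_eq_right
      simp only [id_eq]
      omega
    rw [this]
  · rw [if_neg hjv]

lemma isGenHess_step (n : ℕ) (I : Finset ℕ) (h : ℕ → ℕ) (hgen : IsGenHess n I h)
    {j : ℕ} (hj1 : 1 ≤ j) (hjn : j ≤ n - 1) (hjV : j ∉ verts n I)
    (hj1V : j + 1 ∈ verts n I)
    (h' : ℕ → ℕ) (hh'j : h' j = h (j + 1)) (hh' : ∀ v, v ≠ j → h' v = h v) :
    IsGenHess n (insert j I) h' := by
  obtain ⟨hb, hmap, hid, hmono⟩ := hgen
  have hne := mem_verts_ne n I hjV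
  refine ⟨?_, ?_, ?_, ?_⟩
  · intro i hi
    rcases Finset.mem_insert.mp hi with hij | hi
    · subst i; exact ⟨hj1, hjn⟩
    · exact hb i hi
  · intro i hi
    rw [verts_insert] at hi ⊢
    rcases Finset.mem_insert.mp hi with hij | hi
    · subst i
      rw [hh'j]
      exact Finset.mem_insert_of_mem (hmap _ hj1V)
    · rw [hh' i (hne i hi)]
      exact Finset.mem_insert_of_mem (hmap _ hi)
  · intro i hi
    rw [verts_insert] at hi
    rcases Finset.mem_insert.mp hi with hij | hi
    · subst i
      rw [hh'j]
      have := hid _ hj1V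
      omega
    · rw [hh' i (hne i hi)]
      exact hid _ hi
  · intro i hi k hk hik
    rw [verts_insert] at hi hk
    rcases Finset.mem_insert.mp hi with hij | hi <;>
      rcases Finset.mem_insert.mp hk with hkj | hk
    · subst i; subst k; exact le_refl _
    · subst i
      rw [hh'j, hh' k (hne k hk)]
      have hkj : k ≠ j := hne k hk
      exact hmono _ hj1V _ hk (by omega)
    · subst k
      rw [hh'j, hh' i (hne i hi)]
      exact hmono _ hi _ hj1V (by omega)
    · rw [hh' i (hne i hi), hh' k (hne k hk)]
      exact hmono _ hi _ hk hik

variable {N : ℕ}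

def Eg (j : ℕ) (g : ℕ → Finset (Fin N)) (c : Fin N) : ℕ → Finset (Fin N) :=
  fun u => if u = j then (g (j + 1)).erase c else if u = j + 1 then {c} else g u

def Dg (j : ℕ) (g : ℕ → Finset (Fin N)) : ℕ → Finset (Fin N) :=
  fun v => if v = j + 1 then g j ∪ g (j + 1) else g v

lemma properN_congr (n : ℕ) (I : Finset ℕ) (h : ℕ → ℕ) (g g' : ℕ → Finset (Fin N))
    (hgg : ∀ v ∈ verts n I, g v = g' v) (hp : ProperN n I h g) : ProperN n I h g' := by
  obtain ⟨h1, h2⟩ := hp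
  constructor
  · intro v hv; rw [← hgg v hv]; exact h1 v hv
  · intro v hv u hu hlt hle
    rw [← hgg v hv, ← hgg u hu]
    exact h2 v hv u hu hlt hle

lemma monN_congr (V : Finset ℕ) (g g' : ℕ → Finset (Fin N))
    (hgg : ∀ v ∈ V, g v = g' v) : monN V g = monN V g' :=
  Finset.prod_congr rfl fun v hv => by rw [hgg v hv]

lemma ascN_congr (V : Finset ℕ) (h : ℕ → ℕ) (g g' : ℕ → Finset (Fin N))
    (hgg : ∀ v ∈ V, g v = g' v) : ascN V h g = ascN V h g' :=
  Finset.sum_congr rfl fun v hv => Finset.sum_congr rfl fun u hu => by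
    rw [hgg v hv, hgg u hu]

lemma Eg_at_j {N : ℕ} (j : ℕ) (g : ℕ → Finset (Fin N)) (c : Fin N) :
    Eg j g c j = (g (j + 1)).erase c := by simp [Eg]

lemma Eg_at_j1 {N : ℕ} (j : ℕ) (g : ℕ → Finset (Fin N)) (c : Fin N) :
    Eg j g c (j + 1) = {c} := by
  rw [Eg]
  rw [if_neg (by omega), if_pos rfl]

lemma Eg_at_other {N : ℕ} (j : ℕ) (g : ℕ → Finset (Fin N)) (c : Fin N)
    (w : ℕ) (h1 : w ≠ j) (h2 : w ≠ j + 1) : Eg j g c w = g w := by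
  rw [Eg]
  rw [if_neg h1, if_neg h2]

lemma properN_step_fwd (n : ℕ) (I : Finset ℕ) (h : ℕ → ℕ) (hgen : IsGenHess n I h)
    {j : ℕ} (hjV : j ∉ verts n I) (hj1V : j + 1 ∈ verts n I)
    (h' : ℕ → ℕ) (hh'j : h' j = h (j + 1)) (hh' : ∀ v, v ≠ j → h' v = h v)
    (g : ℕ → Finset (Fin N)) (c : Fin N) (hc : c ∈ g (j + 1))
    (hp : ProperN n I h g) : ProperN n (insert j I) h' (Eg j g c) := by
  obtain ⟨hcard, hdisj⟩ := hp
  have hne := mem_verts_ne n I hjV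
  have hmap := hgen.2.1
  constructor
  · intro v hv
    rw [verts_insert] at hv
    rcases Finset.mem_insert.mp hv with hvj | hv
    · subst v
      rw [Eg_at_j, Finset.card_erase_of_mem hc, hcard _ hj1V, wt_w2 n I hjV]
      omega
    · by_cases hvj1 : v = j + 1
      · subst hvj1
        rw [Eg_at_j1, Finset.card_singleton, wt_w1 n I hjV]
      · rw [Eg_at_other j g c v (hne v hv) hvj1, wt_w3 n I hjV hj1V v hv hvj1]
        exact hcard v hv
  · intro v hv u hu hlt hle
    rw [verts_insert] at hv hu
    rcases Finset.mem_insert.mp hv with hvj | hv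
    · -- v = j
      subst v
      rw [hh'j] at hle
      rcases Finset.mem_insert.mp hu with huj | hu
      · omega
      · by_cases huj1 : u = j + 1
        · subst u
          rw [Eg_at_j, Eg_at_j1]
          exact Finset.disjoint_singleton_right.mpr (Finset.notMem_erase c _)
        · have hju : j + 1 < u := by have := hne u hu; omega
          rw [Eg_at_j, Eg_at_other j g c u (hne u hu) huj1]
          exact Finset.disjoint_of_subset_left (Finset.erase_subset _ _)
            (hdisj _ hj1V _ hu hju hle)
    · rcases Finset.mem_insert.mp hu with huj | hu
      · -- u = j, v ∈ V, v < j
        subst u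
        rw [hh' v (hne v hv)] at hle
        have hvj1 : v ≠ j + 1 := by omega
        have hj1hv : j + 1 ≤ h v := by
          have := hne _ (hmap v hv)
          omega
        rw [Eg_at_other j g c v (hne v hv) hvj1, Eg_at_j]
        exact Finset.disjoint_of_subset_right (Finset.erase_subset _ _)
          (hdisj _ hv _ hj1V (by omega) hj1hv)
      · -- both in V
        rw [hh' v (hne v hv)] at hle
        by_cases hvj1 : v = j + 1
        · subst hvj1
          have huj1 : u ≠ j + 1 := by omega
          rw [Eg_at_j1, Eg_at_other j g c u (hne u hu) huj1]
          exact Finset.disjoint_of_subset_left (Finset.singleton_subset_iff.mpr hc)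
            (hdisj _ hj1V _ hu hlt hle)
        · by_cases huj1 : u = j + 1
          · subst huj1
            rw [Eg_at_other j g c v (hne v hv) hvj1, Eg_at_j1]
            exact Finset.disjoint_of_subset_right (Finset.singleton_subset_iff.mpr hc)
              (hdisj _ hv _ hj1V hlt hle)
          · rw [Eg_at_other j g c v (hne v hv) hvj1,
              Eg_at_other j g c u (hne u hu) huj1]
            exact hdisj _ hv _ hu hlt hle

lemma surj_aux (n : ℕ) (I : Finset ℕ) (h : ℕ → ℕ) (hgen : IsGenHess n I h)
    {j : ℕ} (hjV : j ∉ verts n I) (hj1V : j + 1 ∈ verts n I)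
    (h' : ℕ → ℕ) (hh'j : h' j = h (j + 1)) (hh' : ∀ v, v ≠ j → h' v = h v)
    (g' : ℕ → Finset (Fin N)) (hp : ProperN n (insert j I) h' g') :
    ∃ c, g' (j + 1) = {c} ∧ ProperN n I h (Dg j g') ∧
      (∀ u ∈ verts n (insert j I), Eg j (Dg j g') c u = g' u) := by
  obtain ⟨hcard, hdisj⟩ := hp
  have hne := mem_verts_ne n I hjV
  have hmap := hgen.2.1
  have hjm : j ∈ verts n (insert j I) := by
    rw [verts_insert]; exact Finset.mem_insert_self _ _
  have hj1m : j + 1 ∈ verts n (insert j I) := by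
    rw [verts_insert]; exact Finset.mem_insert_of_mem hj1V
  have hmemV' : ∀ v ∈ verts n I, v ∈ verts n (insert j I) := by
    intro v hv; rw [verts_insert]; exact Finset.mem_insert_of_mem hv
  have hcard1 : (g' (j + 1)).card = 1 := by
    rw [hcard _ hj1m, wt_w1 n I hjV]
  obtain ⟨c, hc⟩ := Finset.card_eq_one.mp hcard1
  have hdjj1 : Disjoint (g' j) (g' (j + 1)) := by
    apply hdisj _ hjm _ hj1m (by omega)
    rw [hh'j]
    exact hgen.2.2.1 _ hj1V
  have hcnotj : c ∉ g' j := by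
    rw [hc] at hdjj1
    exact Finset.disjoint_singleton_right.mp hdjj1
  have hDj1 : Dg j g' (j + 1) = g' j ∪ g' (j + 1) := by simp [Dg]
  have hDoth : ∀ w, w ≠ j + 1 → Dg j g' w = g' w := by
    intro w hw; rw [Dg]; rw [if_neg hw]
  refine ⟨c, hc, ⟨?_, ?_⟩, ?_⟩
  · -- cards
    intro v hv
    by_cases hvj1 : v = j + 1
    · subst hvj1
      rw [hDj1, Finset.card_union_of_disjoint hdjj1, hcard _ hjm, hcard _ hj1m,
        wt_w1 n I hjV, wt_w2 n I hjV]
    · rw [hDoth v hvj1, hcard _ (hmemV' v hv), wt_w3 n I hjV hj1V v hv hvj1]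
  · -- disjoint
    intro v hv u hu hlt hle
    by_cases hvj1 : v = j + 1
    · subst hvj1
      have huj1 : u ≠ j + 1 := by omega
      rw [hDj1, hDoth u huj1]
      apply Finset.disjoint_union_left.mpr
      constructor
      · apply hdisj _ hjm _ (hmemV' u hu) (by omega)
        rw [hh'j]; exact hle
      · apply hdisj _ hj1m _ (hmemV' u hu) hlt
        rw [hh' _ (by omega)]; exact hle
    · rw [hDoth v hvj1]
      by_cases huj1 : u = j + 1
      · subst huj1
        rw [hDj1]
        apply Finset.disjoint_union_right.mpr
        have hvj : v < j := by have := hne v hv; omega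
        constructor
        · apply hdisj _ (hmemV' v hv) _ hjm hvj
          rw [hh' _ (hne v hv)]; omega
        · apply hdisj _ (hmemV' v hv) _ hj1m hlt
          rw [hh' _ (hne v hv)]; exact hle
      · rw [hDoth u huj1]
        apply hdisj _ (hmemV' v hv) _ (hmemV' u hu) hlt
        rw [hh' _ (hne v hv)]; exact hle
  · -- Eg (Dg g') c = g' on V'
    intro u hu
    rw [verts_insert] at hu
    rcases Finset.mem_insert.mp hu with huj | hu
    · subst u
      rw [Eg_at_j, hDj1, hc, Finset.erase_union_distrib,
        Finset.erase_eq_of_notMem hcnotj, Finset.erase_singleton, Finset.union_empty]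
    · by_cases huj1 : u = j + 1
      · subst huj1
        rw [Eg_at_j1, hc]
      · rw [Eg_at_other j (Dg j g') c u (hne u hu) huj1, hDoth u huj1]
-- ===================== part 3 =====================

lemma monN_step (n : ℕ) (I : Finset ℕ) {j : ℕ} (hjV : j ∉ verts n I)
    (hj1V : j + 1 ∈ verts n I) (g : ℕ → Finset (Fin N)) (c : Fin N)
    (hc : c ∈ g (j + 1)) :
    monN (insert j (verts n I)) (Eg j g c) = monN (verts n I) g := by
  classical
  set E := (verts n I).erase (j + 1) with hE
  have hVE : insert (j + 1) E = verts n I := Finset.insert_erase hj1V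
  have hj1E : j + 1 ∉ E := Finset.notMem_erase _ _
  have hjE : j ∉ E := fun hm => hjV (Finset.erase_subset _ _ hm)
  have hjV' : j ∉ insert (j + 1) E := by rw [hVE]; exact hjV
  rw [monN, monN, ← hVE, Finset.prod_insert hjV', Finset.prod_insert hj1E,
    Finset.prod_insert hj1E, Eg_at_j, Eg_at_j1, Finset.prod_singleton]
  have h1 : (∏ v ∈ E, ∏ a ∈ Eg j g c v, (MvPolynomial.X a : MvPolynomial (Fin N) ℤ))
      = ∏ v ∈ E, ∏ a ∈ g v, MvPolynomial.X a := by
    refine Finset.prod_congr rfl fun v hv => ?_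
    have hv2 : v ≠ j + 1 := (Finset.mem_erase.mp hv).1
    have hv3 : v ≠ j := fun hvj => hjE (hvj ▸ hv)
    rw [Eg_at_other j g c v hv3 hv2]
  rw [h1]
  have h2 : (∏ a ∈ (g (j + 1)).erase c, (MvPolynomial.X a : MvPolynomial (Fin N) ℤ))
      * MvPolynomial.X c = ∏ a ∈ g (j + 1), MvPolynomial.X a :=
    Finset.prod_erase_mul _ _ hc
  rw [← h2]
  ring

lemma sum_step (E : Finset ℕ) (a b : ℕ) (hab : a ≠ b) (haE : a ∉ E) (hbE : b ∉ E)
    (F' F : ℕ → ℕ → ℕ) (r : ℕ)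
    (h1 : F' a a = 0) (h2 : F' a b = r) (h3 : F' b a = 0) (h4 : F' b b = 0)
    (h5 : F b b = 0)
    (hrow : ∀ u ∈ E, F' a u + F' b u = F b u)
    (hcol : ∀ v ∈ E, F' v a + F' v b = F v b)
    (hmid : ∀ v ∈ E, ∀ u ∈ E, F' v u = F v u) :
    ∑ v ∈ insert a (insert b E), ∑ u ∈ insert a (insert b E), F' v u
      = (∑ v ∈ insert b E, ∑ u ∈ insert b E, F v u) + r := by
  have haE' : a ∉ insert b E := by simp [hab, haE]
  simp only [Finset.sum_insert haE', Finset.sum_insert hbE]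
  rw [h1, h2, h3, h4, h5]
  have e1 : (∑ u ∈ E, F' a u) + (∑ u ∈ E, F' b u) = ∑ u ∈ E, F b u := by
    rw [← Finset.sum_add_distrib]
    exact Finset.sum_congr rfl hrow
  have e2 : (∑ v ∈ E, (F' v a + (F' v b + ∑ u ∈ E, F' v u)))
      = ∑ v ∈ E, (F v b + ∑ u ∈ E, F v u) := by
    refine Finset.sum_congr rfl fun v hv => ?_
    have e3 : (∑ u ∈ E, F' v u) = ∑ u ∈ E, F v u :=
      Finset.sum_congr rfl fun u hu => hmid v hv u hu
    rw [e3, ← hcol v hv]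
    omega
  rw [e2]
  omega

lemma ascN_step (n : ℕ) (I : Finset ℕ) (h : ℕ → ℕ) (hgen : IsGenHess n I h)
    {j : ℕ} (hjV : j ∉ verts n I) (hj1V : j + 1 ∈ verts n I)
    (h' : ℕ → ℕ) (hh'j : h' j = h (j + 1)) (hh' : ∀ v, v ≠ j → h' v = h v)
    (g : ℕ → Finset (Fin N)) (c : Fin N) (hc : c ∈ g (j + 1)) :
    ascN (insert j (verts n I)) h' (Eg j g c) =
      ascN (verts n I) h g + ((g (j + 1)).filter fun b => b < c).card := by
  classical
  have hne := mem_verts_ne n I hjV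
  have hmap := hgen.2.1
  set E := (verts n I).erase (j + 1) with hE
  have hVE : insert (j + 1) E = verts n I := Finset.insert_erase hj1V
  have hj1E : j + 1 ∉ E := Finset.notMem_erase _ _
  have hjE : j ∉ E := fun hm => hjV (Finset.erase_subset _ _ hm)
  rw [ascN, ascN, ← hVE]
  refine sum_step E j (j + 1) (by omega) hjE hj1E _ _ _ ?_ ?_ ?_ ?_ ?_ ?_ ?_ ?_
  · exact if_neg (by omega)
  · rw [if_pos ⟨by omega, by rw [hh'j]; exact hgen.2.2.1 _ hj1V⟩,
      Eg_at_j, Eg_at_j1, pcnt_erase_singleton _ hc]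
  · exact if_neg (by omega)
  · exact if_neg (by omega)
  · exact if_neg (by omega)
  · -- hrow
    intro u hu
    have hu2 : u ≠ j + 1 := (Finset.mem_erase.mp hu).1
    have hu1 : u ∈ verts n I := Finset.mem_of_mem_erase hu
    have hu3 : u ≠ j := hne u hu1
    rw [Eg_at_j, Eg_at_j1, Eg_at_other j g c u hu3 hu2, hh'j, hh' (j + 1) (by omega)]
    by_cases hcond : j + 1 < u ∧ u ≤ h (j + 1)
    · rw [if_pos (⟨by omega, hcond.2⟩ : j < u ∧ u ≤ h (j + 1)), if_pos hcond,
        if_pos hcond]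
      exact pcnt_erase_left _ _ hc
    · rw [if_neg (by omega), if_neg (by omega), if_neg (by omega)]
  · -- hcol
    intro v hv
    have hv2 : v ≠ j + 1 := (Finset.mem_erase.mp hv).1
    have hv1 : v ∈ verts n I := Finset.mem_of_mem_erase hv
    have hv3 : v ≠ j := hne v hv1
    have hvne : h v ≠ j := hne _ (hmap v hv1)
    rw [Eg_at_other j g c v hv3 hv2, Eg_at_j, Eg_at_j1, hh' v hv3]
    by_cases hcond : v < j + 1 ∧ j + 1 ≤ h v
    · rw [if_pos (⟨by omega, by omega⟩ : v < j ∧ j ≤ h v), if_pos hcond,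
        if_pos hcond]
      exact pcnt_erase_right _ _ hc
    · rw [if_neg (by omega), if_neg (by omega), if_neg (by omega)]
  · -- hmid
    intro v hv u hu
    have hv2 : v ≠ j + 1 := (Finset.mem_erase.mp hv).1
    have hv1 : v ∈ verts n I := Finset.mem_of_mem_erase hv
    have hv3 : v ≠ j := hne v hv1
    have hu2 : u ≠ j + 1 := (Finset.mem_erase.mp hu).1
    have hu1 : u ∈ verts n I := Finset.mem_of_mem_erase hu
    have hu3 : u ≠ j := hne u hu1
    rw [Eg_at_other j g c v hv3 hv2, Eg_at_other j g c u hu3 hu2, hh' v hv3]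
-- ===================== part 4 : csf_step =====================

lemma extg_apply (n : ℕ) (I : Finset ℕ)
    (f : {x // x ∈ verts n I} → Finset (Fin N)) (v : ℕ) (hv : v ∈ verts n I) :
    extg n I f v = f ⟨v, hv⟩ := dif_pos hv


lemma csf_step (n : ℕ) (I : Finset ℕ) (h : ℕ → ℕ) (hgen : IsGenHess n I h)
    {j : ℕ} (hjV : j ∉ verts n I) (hj1V : j + 1 ∈ verts n I)
    (h' : ℕ → ℕ) (hh'j : h' j = h (j + 1)) (hh' : ∀ v, v ≠ j → h' v = h v)
    (N : ℕ) :
    csf n (insert j I) h' N = csf n I h N * qNum (MvPolynomial (Fin N) ℤ) (wt n I (j + 1)) := by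
  classical
  have hne := mem_verts_ne n I hjV
  have hjm' : j ∈ verts n (insert j I) := by
    rw [verts_insert]; exact Finset.mem_insert_self _ _
  have hj1m' : j + 1 ∈ verts n (insert j I) := by
    rw [verts_insert]; exact Finset.mem_insert_of_mem hj1V
  have hmemV' : ∀ v ∈ verts n I, v ∈ verts n (insert j I) := by
    intro v hv; rw [verts_insert]; exact Finset.mem_insert_of_mem hv
  have main : (∑ x ∈ (Finset.univ.filter
        (fun γ : {x // x ∈ verts n I} → Finset (Fin N) => IsProper n I h γ)).sigma
        (fun γ => γ ⟨j + 1, hj1V⟩),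
      Polynomial.C (monN (verts n I) (extg n I x.1)) *
        Polynomial.X ^ (ascN (verts n I) h (extg n I x.1) +
          ((extg n I x.1 (j + 1)).filter fun b => b < x.2).card))
      = csf n (insert j I) h' N := by
    rw [csf_eq]
    apply Finset.sum_bij
      (i := fun (x : Σ _γ : {y // y ∈ verts n I} → Finset (Fin N), Fin N) _ =>
        (fun u : {y // y ∈ verts n (insert j I)} => Eg j (extg n I x.1) x.2 u.val))
    · -- maps into target
      intro x hx
      obtain ⟨hx1, hx2⟩ := Finset.mem_sigma.mp hx
      have hp : ProperN n I h (extg n I x.1) :=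
        (isProper_iff n I h x.1).mp (Finset.mem_filter.mp hx1).2
      have hcx : x.2 ∈ extg n I x.1 (j + 1) := by
        have hcoe : extg n I x.1 (j + 1) = x.1 ⟨j + 1, hj1V⟩ := extg_coe n I x.1 ⟨j + 1, hj1V⟩
        rw [hcoe]; exact hx2
      refine Finset.mem_filter.mpr ⟨Finset.mem_univ _, ?_⟩
      apply (isProper_iff n (insert j I) h' _).mpr
      have hP : ProperN n (insert j I) h' (Eg j (extg n I x.1) x.2) :=
        properN_step_fwd n I h hgen hjV hj1V h' hh'j hh' _ _ hcx hp
      exact properN_congr n (insert j I) h' _ _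
        (fun v hv => (extg_apply n (insert j I)
          (fun u : {y // y ∈ verts n (insert j I)} => Eg j (extg n I x.1) x.2 u.val)
          v hv).symm) hP
    · -- injective
      rintro ⟨γx, cx⟩ hx ⟨γy, cy⟩ hy heq
      obtain ⟨hx1, hx2⟩ := Finset.mem_sigma.mp hx
      obtain ⟨hy1, hy2⟩ := Finset.mem_sigma.mp hy
      have hcoex : extg n I γx (j + 1) = γx ⟨j + 1, hj1V⟩ := extg_coe n I γx ⟨j + 1, hj1V⟩
      have hcoey : extg n I γy (j + 1) = γy ⟨j + 1, hj1V⟩ := extg_coe n I γy ⟨j + 1, hj1V⟩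
      have hcx : cx ∈ extg n I γx (j + 1) := by rw [hcoex]; exact hx2
      have hcy : cy ∈ extg n I γy (j + 1) := by rw [hcoey]; exact hy2
      have hcc : Eg j (extg n I γx) cx (j + 1) = Eg j (extg n I γy) cy (j + 1) :=
        congrFun heq ⟨j + 1, hj1m'⟩
      rw [Eg_at_j1, Eg_at_j1] at hcc
      have hc2 : cx = cy := Finset.singleton_injective hcc
      subst hc2
      have hγ : γx = γy := by
        funext v
        by_cases hv1 : v.val = j + 1
        · have hj' : Eg j (extg n I γx) cx j = Eg j (extg n I γy) cx j :=
            congrFun heq ⟨j, hjm'⟩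
          rw [Eg_at_j, Eg_at_j] at hj'
          have hext : extg n I γx (j + 1) = extg n I γy (j + 1) := by
            rw [← Finset.insert_erase hcx, ← Finset.insert_erase hcy, hj']
          have hv : v = ⟨j + 1, hj1V⟩ := Subtype.ext hv1
          rw [hv, ← hcoex, ← hcoey, hext]
        · have hvm' : v.val ∈ verts n (insert j I) := hmemV' v.val v.2
          have hvv : Eg j (extg n I γx) cx v.val = Eg j (extg n I γy) cx v.val :=
            congrFun heq ⟨v.val, hvm'⟩
          have hvj : v.val ≠ j := hne v.val v.2
          rw [Eg_at_other _ _ _ _ hvj hv1, Eg_at_other _ _ _ _ hvj hv1,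
            extg_coe, extg_coe] at hvv
          exact hvv
      rw [hγ]
    · -- surjective
      intro γ' hγ'
      have hp' : ProperN n (insert j I) h' (extg n (insert j I) γ') :=
        (isProper_iff n (insert j I) h' γ').mp (Finset.mem_filter.mp hγ').2
      obtain ⟨c, hc, hpD, hEgD⟩ :=
        surj_aux n I h hgen hjV hj1V h' hh'j hh' _ hp'
      have hDj1 : Dg j (extg n (insert j I) γ') (j + 1)
          = extg n (insert j I) γ' j ∪ extg n (insert j I) γ' (j + 1) := by simp [Dg]
      refine ⟨⟨fun v => Dg j (extg n (insert j I) γ') v.val, c⟩, ?_, ?_⟩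
      · apply Finset.mem_sigma.mpr
        constructor
        · refine Finset.mem_filter.mpr ⟨Finset.mem_univ _, ?_⟩
          apply (isProper_iff n I h _).mpr
          exact properN_congr n I h _ _
            (fun v hv => (extg_apply n I
              (fun w : {y // y ∈ verts n I} => Dg j (extg n (insert j I) γ') w.val)
              v hv).symm) hpD
        · show c ∈ Dg j (extg n (insert j I) γ') (j + 1)
          rw [hDj1]
          exact Finset.mem_union_right _ (by rw [hc]; exact Finset.mem_singleton_self c)
      · funext u
        show Eg j (extg n I (fun v => Dg j (extg n (insert j I) γ') v.val)) c u.val = γ' u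
        have hgg2 : Eg j (extg n I (fun v => Dg j (extg n (insert j I) γ') v.val)) c u.val
            = Eg j (Dg j (extg n (insert j I) γ')) c u.val := by
          by_cases hu1 : u.val = j
          · rw [hu1, Eg_at_j, Eg_at_j]
            congr 1
            exact extg_apply n I _ (j + 1) hj1V
          · by_cases hu2 : u.val = j + 1
            · rw [hu2, Eg_at_j1, Eg_at_j1]
            · have humem : u.val ∈ verts n I := by
                have h2 : u.val ∈ insert j (verts n I) := by
                  rw [← verts_insert]; exact u.2
                rcases Finset.mem_insert.mp h2 with h1 | h1
                · exact absurd h1 hu1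
                · exact h1
              rw [Eg_at_other _ _ _ _ hu1 hu2, Eg_at_other _ _ _ _ hu1 hu2]
              exact extg_apply n I _ u.val humem
        rw [hgg2, hEgD u.val u.2]
        exact extg_coe n (insert j I) γ' u
    · -- values
      intro x hx
      obtain ⟨hx1, hx2⟩ := Finset.mem_sigma.mp hx
      have hcx : x.2 ∈ extg n I x.1 (j + 1) := by
        have hcoe : extg n I x.1 (j + 1) = x.1 ⟨j + 1, hj1V⟩ := extg_coe n I x.1 ⟨j + 1, hj1V⟩
        rw [hcoe]; exact hx2
      have hgg : ∀ v ∈ verts n (insert j I),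
          extg n (insert j I) (fun u : {y // y ∈ verts n (insert j I)} =>
            Eg j (extg n I x.1) x.2 u.val) v = Eg j (extg n I x.1) x.2 v :=
        fun v hv => extg_apply n (insert j I) _ v hv
      rw [monN_congr _ _ _ hgg, ascN_congr _ _ _ _ hgg, verts_insert,
        monN_step n I hjV hj1V _ _ hcx,
        ascN_step n I h hgen hjV hj1V h' hh'j hh' _ _ hcx]
  rw [← main, Finset.sum_sigma, csf_eq, Finset.sum_mul]
  refine Finset.sum_congr rfl fun γ hγ => ?_
  have hcoe : extg n I γ (j + 1) = γ ⟨j + 1, hj1V⟩ := extg_coe n I γ ⟨j + 1, hj1V⟩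
  have hcard : (extg n I γ (j + 1)).card = wt n I (j + 1) := by
    rw [hcoe]
    exact (Finset.mem_filter.mp hγ).2.1 ⟨j + 1, hj1V⟩
  calc (∑ c ∈ γ ⟨j + 1, hj1V⟩,
        Polynomial.C (monN (verts n I) (extg n I γ)) *
          Polynomial.X ^ (ascN (verts n I) h (extg n I γ) +
            ((extg n I γ (j + 1)).filter fun b => b < c).card))
      = ∑ c ∈ extg n I γ (j + 1),
          (Polynomial.C (monN (verts n I) (extg n I γ)) *
            Polynomial.X ^ ascN (verts n I) h (extg n I γ)) *
            Polynomial.X ^ (((extg n I γ (j + 1)).filter fun b => b < c).card) := by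
        rw [hcoe]
        exact Finset.sum_congr rfl fun c _ => by rw [pow_add, mul_assoc]
    _ = (Polynomial.C (monN (verts n I) (extg n I γ)) *
          Polynomial.X ^ ascN (verts n I) h (extg n I γ)) *
          qNum (MvPolynomial (Fin N) ℤ) (wt n I (j + 1)) := by
        rw [← Finset.mul_sum, rank_sum, hcard]
-- ===================== part 5 : assembly =====================

lemma mem_verts_iff (n : ℕ) (I : Finset ℕ) (v : ℕ) :
    v ∈ verts n I ↔ v = n ∨ v ∈ I := Finset.mem_insert

lemma wt_full (n : ℕ) (hn : 1 ≤ n) (v : ℕ) (hv : v ∈ verts n (Finset.Icc 1 (n - 1))) :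
    wt n (Finset.Icc 1 (n - 1)) v = 1 := by
  have hvb : 1 ≤ v ∧ v ≤ n := by
    rcases (mem_verts_iff _ _ _).mp hv with h1 | h1
    · omega
    · have := Finset.mem_Icc.mp h1; omega
  rw [wt]
  by_cases hv1 : v = 1
  · have hemp : (verts n (Finset.Icc 1 (n - 1))).filter (fun u => u < v) = ∅ := by
      rw [Finset.filter_eq_empty_iff]
      intro u hu
      rcases (mem_verts_iff _ _ _).mp hu with h1 | h1
      · omega
      · have := Finset.mem_Icc.mp h1; omega
    rw [hemp]
    simp [hv1]
  · have hsup : ((verts n (Finset.Icc 1 (n - 1))).filter (fun u => u < v)).sup id = v - 1 := by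
      apply le_antisymm
      · apply Finset.sup_le
        intro u hu
        have := (Finset.mem_filter.mp hu).2
        simp only [id_eq]
        omega
      · have hmemV : v - 1 ∈ verts n (Finset.Icc 1 (n - 1)) :=
          (mem_verts_iff _ _ _).mpr (Or.inr (Finset.mem_Icc.mpr ⟨by omega, by omega⟩))
        have hmem : v - 1 ∈ (verts n (Finset.Icc 1 (n - 1))).filter (fun u => u < v) :=
          Finset.mem_filter.mpr ⟨hmemV, by omega⟩
        exact Finset.le_sup (f := id) hmem
    rw [hsup]
    omega

lemma prod_step (n : ℕ) (I : Finset ℕ) {j : ℕ} (hjV : j ∉ verts n I)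
    (hj1V : j + 1 ∈ verts n I) (N : ℕ) :
    qNum (MvPolynomial (Fin N) ℤ) (wt n I (j + 1)) *
      ∏ v ∈ verts n (insert j I), qFact (MvPolynomial (Fin N) ℤ) (wt n (insert j I) v)
      = ∏ v ∈ verts n I, qFact (MvPolynomial (Fin N) ℤ) (wt n I v) := by
  classical
  set E := (verts n I).erase (j + 1) with hE
  have hVE : insert (j + 1) E = verts n I := Finset.insert_erase hj1V
  have hj1E : j + 1 ∉ E := Finset.notMem_erase _ _
  have hjE : j ∉ E := fun hm => hjV (Finset.erase_subset _ _ hm)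
  have hjV' : j ∉ insert (j + 1) E := by rw [hVE]; exact hjV
  rw [verts_insert, ← hVE, Finset.prod_insert hjV', Finset.prod_insert hj1E,
    Finset.prod_insert hj1E]
  have hprod : (∏ v ∈ E, qFact (MvPolynomial (Fin N) ℤ) (wt n (insert j I) v))
      = ∏ v ∈ E, qFact (MvPolynomial (Fin N) ℤ) (wt n I v) := by
    refine Finset.prod_congr rfl fun v hv => ?_
    rw [wt_w3 n I hjV hj1V v (Finset.mem_of_mem_erase hv) (Finset.mem_erase.mp hv).1]
  rw [hprod, wt_w1 n I hjV, qFact_one, one_mul, wt_w2 n I hjV]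
  have hfact : qFact (MvPolynomial (Fin N) ℤ) (wt n (insert j I) j + 1)
      = qNum (MvPolynomial (Fin N) ℤ) (wt n (insert j I) j + 1) *
        qFact (MvPolynomial (Fin N) ℤ) (wt n (insert j I) j) := rfl
  rw [hfact, mul_assoc]

end

end GenHess

open GenHess

theorem csf_flag_bundle (n : ℕ) (I : Finset ℕ) (h : ℕ → ℕ) (hgen : IsGenHess n I h)
    (htil : ℕ → ℕ)
    (hhtil : ∀ i, 1 ≤ i → i ≤ n → ∀ v ∈ verts n I, i ≤ v →
      (∀ u ∈ verts n I, i ≤ u → v ≤ u) → htil i = h v)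
    (N : ℕ) (hN : 1 ≤ N) :
    csf n (Finset.Icc 1 (n - 1)) htil N =
      csf n I h N * ∏ v ∈ verts n I, qFact (MvPolynomial (Fin N) ℤ) (wt n I v) := by
  classical
  suffices H : ∀ (k : ℕ) (I : Finset ℕ) (h : ℕ → ℕ), IsGenHess n I h →
      (∀ i, 1 ≤ i → i ≤ n → ∀ v ∈ verts n I, i ≤ v →
        (∀ u ∈ verts n I, i ≤ u → v ≤ u) → htil i = h v) →
      (Finset.Icc 1 (n - 1) \ I).card = k →
      csf n (Finset.Icc 1 (n - 1)) htil N =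
        csf n I h N * ∏ v ∈ verts n I, qFact (MvPolynomial (Fin N) ℤ) (wt n I v) by
    exact H _ I h hgen hhtil rfl
  intro k
  induction k with
  | zero =>
    clear hgen hhtil I h
    intro I h hgen hhtil hcard
    have hsub : I ⊆ Finset.Icc 1 (n - 1) := fun i hi => Finset.mem_Icc.mpr (hgen.1 i hi)
    have hIeq : I = Finset.Icc 1 (n - 1) := by
      apply Finset.Subset.antisymm hsub
      intro i hi
      by_contra hni
      have hmem : i ∈ Finset.Icc 1 (n - 1) \ I := Finset.mem_sdiff.mpr ⟨hi, hni⟩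
      rw [Finset.card_eq_zero.mp hcard] at hmem
      exact absurd hmem (Finset.notMem_empty i)
    subst hIeq
    have hprod : (∏ v ∈ verts n (Finset.Icc 1 (n - 1)),
        qFact (MvPolynomial (Fin N) ℤ) (wt n (Finset.Icc 1 (n - 1)) v)) = 1 := by
      apply Finset.prod_eq_one
      intro v hv
      by_cases hn : 1 ≤ n
      · rw [wt_full n hn v hv, qFact_one]
      · have hn0 : n = 0 := by omega
        have hv0 : v = 0 := by
          rcases (mem_verts_iff _ _ _).mp hv with h1 | h1
          · omega
          · have := Finset.mem_Icc.mp h1; omega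
        have hwt : wt n (Finset.Icc 1 (n - 1)) v = 0 := by
          rw [wt, hv0]
          exact Nat.zero_sub _
        rw [hwt]
        rfl
    have hcsf : csf n (Finset.Icc 1 (n - 1)) htil N = csf n (Finset.Icc 1 (n - 1)) h N := by
      apply csf_congr
      intro v hv u hu hlt
      have hun : u ≤ n := by
        rcases (mem_verts_iff _ _ _).mp hu with h1 | h1
        · omega
        · have := Finset.mem_Icc.mp h1; omega
      rcases (mem_verts_iff _ _ _).mp hv with hvn | hvI
      · omega
      · have hv1 := Finset.mem_Icc.mp hvI
        have heq : htil v = h v :=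
          hhtil v hv1.1 (by omega) v hv (le_refl v) (fun u hu hvu => hvu)
        rw [heq]
    rw [hcsf, hprod, mul_one]
  | succ k ih =>
    clear hgen hhtil I h
    intro I h hgen hhtil hcard
    have hsub : I ⊆ Finset.Icc 1 (n - 1) := fun i hi => Finset.mem_Icc.mpr (hgen.1 i hi)
    have hnon : (Finset.Icc 1 (n - 1) \ I).Nonempty := by
      rw [← Finset.card_pos, hcard]; omega
    set j := (Finset.Icc 1 (n - 1) \ I).max' hnon with hjdef
    have hjmem : j ∈ Finset.Icc 1 (n - 1) \ I := Finset.max'_mem _ hnon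
    obtain ⟨hjIcc, hjI⟩ := Finset.mem_sdiff.mp hjmem
    have hjb := Finset.mem_Icc.mp hjIcc
    have hjV : j ∉ verts n I := by
      intro hmem
      rcases (mem_verts_iff _ _ _).mp hmem with h1 | h1
      · omega
      · exact hjI h1
    have hj1V : j + 1 ∈ verts n I := by
      by_cases hjn : j = n - 1
      · have hj1n : j + 1 = n := by omega
        rw [hj1n]
        exact (mem_verts_iff _ _ _).mpr (Or.inl rfl)
      · have hj1Icc : j + 1 ∈ Finset.Icc 1 (n - 1) := Finset.mem_Icc.mpr ⟨by omega, by omega⟩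
        have hj1I : j + 1 ∈ I := by
          by_contra hnot
          have hmm : j + 1 ∈ Finset.Icc 1 (n - 1) \ I := Finset.mem_sdiff.mpr ⟨hj1Icc, hnot⟩
          have := Finset.le_max' _ _ hmm
          omega
        exact (mem_verts_iff _ _ _).mpr (Or.inr hj1I)
    set h' : ℕ → ℕ := fun u => if u = j then h (j + 1) else h u with hh'def
    have hh'j : h' j = h (j + 1) := by rw [hh'def]; simp
    have hh' : ∀ v, v ≠ j → h' v = h v := by intro v hv; rw [hh'def]; simp [hv]
    have hgen' : IsGenHess n (insert j I) h' :=
      isGenHess_step n I h hgen hjb.1 hjb.2 hjV hj1V h' hh'j hh'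
    have hhtil' : ∀ i, 1 ≤ i → i ≤ n → ∀ v ∈ verts n (insert j I), i ≤ v →
        (∀ u ∈ verts n (insert j I), i ≤ u → v ≤ u) → htil i = h' v := by
      intro i hi1 hin v hv hiv hmin
      by_cases hvj : v = j
      · have heq : htil i = h (j + 1) := by
          apply hhtil i hi1 hin (j + 1) hj1V (by omega)
          intro u hu hiu
          have hu' : u ∈ verts n (insert j I) := by
            rw [verts_insert]; exact Finset.mem_insert_of_mem hu
          have h1 := hmin u hu' hiu
          have h2 : u ≠ j := mem_verts_ne n I hjV u hu
          omega
        rw [heq, hvj, hh'j]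
      · have hvV : v ∈ verts n I := by
          have h2 : v ∈ insert j (verts n I) := by rw [← verts_insert]; exact hv
          rcases Finset.mem_insert.mp h2 with h1 | h1
          · exact absurd h1 hvj
          · exact h1
        have heq : htil i = h v := by
          apply hhtil i hi1 hin v hvV hiv
          intro u hu hiu
          exact hmin u (by rw [verts_insert]; exact Finset.mem_insert_of_mem hu) hiu
        rw [heq, hh' v hvj]
    have hcard' : (Finset.Icc 1 (n - 1) \ insert j I).card = k := by
      rw [Finset.sdiff_insert, Finset.card_erase_of_mem hjmem, hcard]
      omega
    have IH := ih (insert j I) h' hgen' hhtil' hcard'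
    rw [IH, csf_step n I h hgen hjV hj1V h' hh'j hh' N, mul_assoc,
      prod_step n I hjV hj1V N]
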